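/- arXiv:2202.13591 — 4 statements merged into one kernel-verified Lean document; each statement's English description precedes it below -/
import Mathlib

section
/- For any finite string T over an alphabet Σ of size σ, the number of minimal absent words for T of the form a^k (a single character repeated, i.e., RLE size 1) equals σ. Specifically, for each character a occurring in T, the string a^{p+1} where p is the length of the longest maximal run of a in T is the unique such MAW, and each character not occurring in T is itself such a MAW. -/
/-- `w` occurs in `T` iff `w` is a (contiguous) substring, i.e. infix, of `T`. -/
def IsMAW {α : Type*} [DecidableEq α] (w T : List α) : Prop :=
  w ≠ [] ∧ ¬ w <:+: T ∧ ∀ v : List α, v <:+: w → v ≠ w → v <:+: T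

/-- RLE size: the number of maximal runs of equal characters. -/
def rleSize {α : Type*} [DecidableEq α] (w : List α) : ℕ :=
  (w.destutter (· ≠ ·)).length

/-- A bridge: length ≥ 2, first two characters differ, last two characters differ. -/
def IsBridge {α : Type*} (w : List α) : Prop :=
  2 ≤ w.length ∧ w[0]? ≠ w[1]? ∧ w[w.length - 2]? ≠ w[w.length - 1]?

/-- Truncate the first run to exponent 1. -/
def truncHead {α : Type*} [DecidableEq α] : List α → List α
  | [] => []
  | a :: t => a :: t.dropWhile (· == a)

/-- Remove the first run completely. -/
def dropHeadRun {α : Type*} [DecidableEq α] : List α → List α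
  | [] => []
  | a :: t => (a :: t).dropWhile (· == a)

/-- Remove the first run and truncate the new first run to exponent 1. -/
def leftReduce {α : Type*} [DecidableEq α] (w : List α) : List α :=
  truncHead (dropHeadRun w)

/-- `bridgeReduce w = w^{(1)}`: remove the first and last runs and truncate the
new outer runs to exponent 1; the empty string if `R(w) ≤ 2`. -/
def bridgeReduce {α : Type*} [DecidableEq α] (w : List α) : List α :=
  if rleSize w ≤ 2 then [] else (leftReduce ((leftReduce w).reverse)).reverse


instance {α : Type*} [DecidableEq α] : DecidablePred (IsBridge (α := α)) := fun w => by
  unfold IsBridge; infer_instance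

/-- Number of occurrences of `w` in `T`. -/
def countOcc {α : Type*} [DecidableEq α] (w T : List α) : ℕ :=
  ((List.range (T.length + 1)).filter
    (fun i => decide ((T.drop i).take w.length = w ∧ i + w.length ≤ T.length))).length

/-- `K(w)`: the set of bridge substrings `z` of `T` with `z^{(1)} = w`, as a `Finset`. -/
def KFin {α : Type*} [DecidableEq α] (T w : List α) : Finset (List α) :=
  T.sublists.toFinset.filter (fun z => z <:+: T ∧ IsBridge z ∧ bridgeReduce z = w)

/-- `K₊(w) = { z ∈ K(w) : |K(z)| ≥ 2 }`. -/
def KplusFin {α : Type*} [DecidableEq α] (T w : List α) : Finset (List α) :=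
  (KFin T w).filter (fun z => 2 ≤ (KFin T z).card)

/-- `K^{(t)}(w)`: bridge substrings `z` of `T` with `z^{(t)} = w`. -/
def KIter {α : Type*} [DecidableEq α] (T w : List α) (t : ℕ) : Finset (List α) :=
  T.sublists.toFinset.filter (fun z => z <:+: T ∧ IsBridge z ∧ bridgeReduce^[t] z = w)

/-- `K₊^{(t)}(w) = { z ∈ K^{(t)}(w) : |K(z)| ≥ 2 }`. -/
def KplusIter {α : Type*} [DecidableEq α] (T w : List α) (t : ℕ) : Finset (List α) :=
  (KIter T w t).filter (fun z => 2 ≤ (KFin T z).card)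

/-- `K(w)` as a set. -/
def KSet {α : Type*} [DecidableEq α] (T w : List α) : Set (List α) :=
  {z | z <:+: T ∧ IsBridge z ∧ bridgeReduce z = w}

/-- Type-3 MAW: a MAW `a u b` with `R = 3`, `a ≠ u[1]`, `b ≠ u[|u|]`. -/
def IsType3MAW {α : Type*} [DecidableEq α] (w T : List α) : Prop :=
  IsMAW w T ∧ rleSize w = 3 ∧
    ∃ (a b : α) (u : List α), u ≠ [] ∧ w = a :: u ++ [b] ∧
      u.head? ≠ some a ∧ u.getLast? ≠ some b

/-- Type-4 MAW: a MAW `a u b` with `R ≥ 4`, `a ≠ u[1]`, `b ≠ u[|u|]`. -/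
def IsType4MAW {α : Type*} [DecidableEq α] (w T : List α) : Prop :=
  IsMAW w T ∧ 4 ≤ rleSize w ∧
    ∃ (a b : α) (u : List α), u ≠ [] ∧ w = a :: u ++ [b] ∧
      u.head? ≠ some a ∧ u.getLast? ≠ some b

/-- Type-5 MAW: a MAW `a u b` with `R ≥ 2` and `a = u[1]` or `b = u[|u|]`. -/
def IsType5MAW {α : Type*} [DecidableEq α] (w T : List α) : Prop :=
  IsMAW w T ∧ 2 ≤ rleSize w ∧
    ∃ (a b : α) (u : List α), u ≠ [] ∧ w = a :: u ++ [b] ∧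
      (u.head? = some a ∨ u.getLast? = some b)

/-- The exponent of the longest maximal run of `a` in `T`. -/
noncomputable def maxRunLen {α : Type*} [DecidableEq α] (a : α) (T : List α) : ℕ :=
  sSup {q : ℕ | List.replicate q a <:+: T}


/-- `w` occurs in `T` starting at position `k` (0-based). -/
def OccursAt {α : Type*} [DecidableEq α] (w T : List α) (k : ℕ) : Prop :=
  k + w.length ≤ T.length ∧ (T.drop k).take w.length = w


section Aux
variable {α : Type*} [DecidableEq α]

private lemma repl_infix_mono {j k : ℕ} (h : j ≤ k) (a : α) :
    List.replicate j a <:+: List.replicate k a := by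
  refine List.IsPrefix.isInfix ⟨List.replicate (k - j) a, ?_⟩
  rw [← List.replicate_add, Nat.add_sub_cancel' h]

private lemma infix_repl {v : List α} {k : ℕ} {a : α} :
    v <:+: List.replicate k a ↔ ∃ j ≤ k, v = List.replicate j a :=
  ⟨fun h => List.sublist_replicate_iff.mp h.sublist,
   fun ⟨j, hj, e⟩ => e ▸ repl_infix_mono hj a⟩

private lemma single_infix {a : α} {T : List α} : [a] <:+: T ↔ a ∈ T := by
  constructor
  · intro h; exact h.sublist.subset (by simp)
  · intro h
    obtain ⟨s, t, rfl⟩ := List.append_of_mem h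
    exact ⟨s, t, by simp⟩

private lemma S_bdd (a : α) (T : List α) :
    BddAbove {q : ℕ | List.replicate q a <:+: T} := by
  refine ⟨T.length, fun q hq => ?_⟩
  simpa using (List.IsInfix.length_le hq)

private lemma zero_mem_S (a : α) (T : List α) :
    (0 : ℕ) ∈ {q : ℕ | List.replicate q a <:+: T} := by
  simp only [Set.mem_setOf_eq, List.replicate_zero]; exact List.nil_infix

private lemma repl_maxRun_infix (a : α) (T : List α) :
    List.replicate (maxRunLen a T) a <:+: T :=
  Nat.sSup_mem ⟨0, zero_mem_S a T⟩ (S_bdd a T)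

private lemma le_maxRun {a : α} {T : List α} {q : ℕ}
    (h : List.replicate q a <:+: T) : q ≤ maxRunLen a T :=
  le_csSup (S_bdd a T) h

private lemma maxRun_succ_not_infix (a : α) (T : List α) :
    ¬ List.replicate (maxRunLen a T + 1) a <:+: T := fun h => by
  have := le_maxRun h; omega

private lemma maw_repl (a : α) (T : List α) :
    IsMAW (List.replicate (maxRunLen a T + 1) a) T := by
  refine ⟨by simp, maxRun_succ_not_infix a T, fun v hv hne => ?_⟩
  obtain ⟨j, hj, rfl⟩ := infix_repl.mp hv
  have hj' : j ≤ maxRunLen a T := by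
    rcases Nat.lt_or_ge j (maxRunLen a T + 1) with h | h
    · omega
    · exact absurd rfl (by
        have : j = maxRunLen a T + 1 := le_antisymm hj h
        subst this; exact hne)
  exact (repl_infix_mono hj' a).trans (repl_maxRun_infix a T)

private lemma maw_repl_unique {a : α} {T : List α} {k : ℕ}
    (h : IsMAW (List.replicate k a) T) : k = maxRunLen a T + 1 := by
  obtain ⟨hne, hninf, hsub⟩ := h
  have hk0 : k ≠ 0 := by rintro rfl; simp at hne
  have hgt : maxRunLen a T < k := by
    by_contra hle
    exact hninf ((repl_infix_mono (by omega) a).trans (repl_maxRun_infix a T))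
  have h1 : List.replicate (k - 1) a <:+: T := by
    refine hsub _ (repl_infix_mono (by omega) a) ?_
    intro he
    have := congrArg List.length he
    simp at this; omega
  have := le_maxRun h1
  omega

private lemma destutter'_len_one (a : α) (l : List α) :
    (List.destutter' (· ≠ ·) a l).length = 1 ↔ l = List.replicate l.length a := by
  induction l generalizing a with
  | nil => simp
  | cons b t ih =>
    by_cases hab : a = b
    · subst hab
      rw [List.destutter'_cons_neg _ (by simp)]
      rw [ih]
      simp [List.replicate_succ]
    · rw [List.destutter'_cons_pos _ (by simpa using hab)]
      simp only [List.length_cons]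
      constructor
      · intro h
        exact absurd h (by have := List.destutter'_ne_nil t (· ≠ ·) (a := b)
                           cases hd : List.destutter' (· ≠ ·) b t with
                           | nil => exact absurd hd this
                           | cons x xs => simp [hd])
      · intro h
        rw [List.replicate_succ] at h
        exact absurd (List.cons.injEq .. ▸ h).1 (Ne.symm hab)

private lemma rle_one_iff {w : List α} :
    rleSize w = 1 ↔ ∃ (a : α) (n : ℕ), w = List.replicate (n + 1) a := by
  constructor
  · intro h
    cases w with
    | nil => simp [rleSize] at h
    | cons a t =>
      rw [rleSize, List.destutter_cons'] at h
      refine ⟨a, t.length, ?_⟩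
      rw [List.replicate_succ, ← (destutter'_len_one a t).mp h]
  · rintro ⟨a, n, rfl⟩
    rw [List.replicate_succ, rleSize, List.destutter_cons']
    rw [destutter'_len_one]
    simp

end Aux

theorem stmt0 {α : Type*} [Fintype α] [DecidableEq α] (T : List α) :
    ({w : List α | IsMAW w T ∧ rleSize w = 1}.ncard = Fintype.card α) ∧
    (∀ a : α, a ∈ T →
      ∀ w : List α,
        (IsMAW w T ∧ ∃ k : ℕ, w = List.replicate k a) ↔
          w = List.replicate (maxRunLen a T + 1) a) ∧
    (∀ a : α, a ∉ T → IsMAW [a] T) := by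
  have hmaw : ∀ a : α, IsMAW (List.replicate (maxRunLen a T + 1) a) T :=
    fun a => maw_repl a T
  refine ⟨?_, ?_, ?_⟩
  · have hset : {w : List α | IsMAW w T ∧ rleSize w = 1} =
        Set.range (fun a : α => List.replicate (maxRunLen a T + 1) a) := by
      ext w
      constructor
      · rintro ⟨hw, hr⟩
        obtain ⟨a, n, rfl⟩ := rle_one_iff.mp hr
        have := maw_repl_unique hw
        exact ⟨a, by rw [this]⟩
      · rintro ⟨a, rfl⟩
        exact ⟨hmaw a, rle_one_iff.mpr ⟨a, _, rfl⟩⟩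
    rw [hset]
    have hinj : Function.Injective
        (fun a : α => List.replicate (maxRunLen a T + 1) a) := by
      intro a b hab
      have := congrArg List.head? hab
      simpa [List.replicate_succ] using this
    rw [← Set.image_univ, Set.ncard_image_of_injective _ hinj, Set.ncard_univ,
      Nat.card_eq_fintype_card]
  · intro a _ w
    constructor
    · rintro ⟨hw, k, rfl⟩
      rw [maw_repl_unique hw]
    · rintro rfl
      exact ⟨hmaw a, _, rfl⟩
  · intro a ha
    refine ⟨by simp, fun h => ha (single_infix.mp h), fun v hv hne => ?_⟩
    have : v <:+: List.replicate 1 a := by simpa using hv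
    obtain ⟨j, hj, rfl⟩ := infix_repl.mp this
    interval_cases j
    · exact List.nil_infix
    · exact absurd (by simp : List.replicate 1 a = [a]) hne
end

section
/- For every n ≥ 4 there exists a string T of length n whose RLE size is 3 and which has exactly n−3 minimal absent words of RLE size 3 whose first character differs from its second character and whose last character differs from its second-to-last character. Consequently, the number of such type-3 MAWs cannot be bounded by any function of the RLE size of T. -/
namespace MAWaux

/-- `W q = 0 1^q 2`. -/
def W (q : ℕ) : List ℕ := 0 :: (List.replicate q 1 ++ [2])

lemma W_length (q : ℕ) : (W q).length = q + 2 := by simp [W]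

lemma getElem?_W (q i : ℕ) :
    (W q)[i]? = if i = 0 then some 0 else if i ≤ q then some 1
      else if i = q + 1 then some 2 else none := by
  match i with
  | 0 => simp [W]
  | (i+1) =>
    simp only [W, List.getElem?_cons_succ]
    rcases Nat.lt_trichotomy i q with h | h | h
    · rw [List.getElem?_append, if_pos (by simpa using h)]
      rw [List.getElem?_replicate, if_pos h, if_neg (by omega), if_pos (by omega)]
    · subst h
      rw [List.getElem?_append_right (by simp)]
      simp
    · rw [List.getElem?_append_right (by simp; omega)]
      rw [if_neg (by omega), if_neg (by omega), if_neg (by omega)]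
      exact List.getElem?_eq_none (by simp; omega)

lemma pair_char {m x y : ℕ} (hm : 1 ≤ m) (h : [x, y] <:+: W m) :
    (x = 0 ∧ y = 1) ∨ (x = 1 ∧ y = 1) ∨ (x = 1 ∧ y = 2) := by
  obtain ⟨s, t, hst⟩ := h
  rw [List.append_assoc] at hst
  have hlen : s.length + 2 + t.length = m + 2 := by
    have := congrArg List.length hst; simp [W] at this; omega
  have hx : (W m)[s.length]? = some x := by
    rw [← hst, List.getElem?_append_right (le_refl _)]; simp
  have hy : (W m)[s.length + 1]? = some y := by
    rw [← hst, List.getElem?_append_right (by omega)]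
    simp [Nat.add_sub_cancel_left]
  rw [getElem?_W] at hx hy
  by_cases h0 : s.length = 0
  · rw [if_pos h0] at hx
    rw [if_neg (by omega), if_pos (by omega)] at hy
    exact Or.inl ⟨by injection hx; omega, by injection hy; omega⟩
  · rw [if_neg h0, if_pos (by omega)] at hx
    by_cases h1 : s.length + 1 ≤ m
    · rw [if_neg (by omega), if_pos h1] at hy
      exact Or.inr (Or.inl ⟨by injection hx; omega, by injection hy; omega⟩)
    · rw [if_neg (by omega), if_neg h1, if_pos (by omega)] at hy
      exact Or.inr (Or.inr ⟨by injection hx; omega, by injection hy; omega⟩)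

lemma zero_prefix {m : ℕ} {v : List ℕ} (h : (0 :: v) <:+: W m) :
    v <+: List.replicate m 1 ++ [2] := by
  obtain ⟨s, t, hst⟩ := h
  rw [List.append_assoc] at hst
  match s with
  | [] =>
    simp only [List.nil_append, W, List.cons_append] at hst
    exact ⟨t, by injection hst⟩
  | a :: s' =>
    exfalso
    simp only [List.cons_append, W] at hst
    have h2 := (List.cons.injEq _ _ _ _).mp hst |>.2
    have : (0 : ℕ) ∈ List.replicate m 1 ++ [2] := by
      rw [← h2]; simp
    simp [List.mem_replicate] at this

lemma W_not_infix {m q : ℕ} (hq : q ≠ m) : ¬ (W q) <:+: W m := by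
  intro h
  have hpre : List.replicate q 1 ++ [2] <+: List.replicate m 1 ++ [2] := zero_prefix h
  have hlen := hpre.length_le
  simp at hlen
  have hqm : q < m := by omega
  have := hpre.getElem (i := q) (by simp)
  rw [List.getElem_append_right (by simp)] at this
  simp [List.getElem_append, hqm] at this

lemma destutter'_rep (q : ℕ) :
    (List.replicate q 1 ++ [2]).destutter' (· ≠ ·) 1 = [1, 2] := by
  induction q with
  | zero => simp [List.destutter'_singleton]
  | succ k ih =>
    rw [List.replicate_succ, List.cons_append, List.destutter'_cons]
    simp [ih]

lemma rleSize_W {q : ℕ} (hq : 1 ≤ q) : rleSize (W q) = 3 := by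
  obtain ⟨k, rfl⟩ : ∃ k, q = k + 1 := ⟨q - 1, by omega⟩
  show ((W (k+1)).destutter (· ≠ ·)).length = 3
  rw [W, List.replicate_succ, List.cons_append, List.destutter,
    List.destutter'_cons]
  simp [destutter'_rep]

lemma infix_dropLast_or_tail {v w : List ℕ} (h : v <:+: w) (hne : v ≠ w) :
    v <:+: w.dropLast ∨ v <:+: w.tail := by
  obtain ⟨s, t, hst⟩ := h
  match t with
  | c :: t' =>
    left
    rw [← hst, List.append_assoc, List.dropLast_append_of_ne_nil (by simp),
      List.dropLast_append_of_ne_nil (by simp)]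
    exact ⟨s, (c :: t').dropLast, by rw [List.append_assoc]⟩
  | [] =>
    match s with
    | [] => exact absurd (by simpa using hst) hne
    | a :: s' =>
      right
      rw [← hst]
      simp only [List.append_nil, List.cons_append, List.tail_cons]
      exact ⟨s', [], by simp⟩

lemma W_dropLast_infix {q m : ℕ} (hqm : q ≤ m) : (W q).dropLast <:+: W m := by
  have h1 : (W q).dropLast = 0 :: List.replicate q 1 := by
    rw [W, ← List.cons_append, List.dropLast_concat]
  rw [h1]
  refine (List.IsPrefix.isInfix ⟨List.replicate (m - q) 1 ++ [2], ?_⟩)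
  rw [W]
  simp only [List.cons_append, List.cons.injEq, true_and, ← List.append_assoc,
    ← List.replicate_add]
  rw [Nat.add_sub_cancel' hqm]

lemma W_tail_infix {q m : ℕ} (hqm : q ≤ m) : (W q).tail <:+: W m := by
  have h1 : (W q).tail = List.replicate q 1 ++ [2] := rfl
  rw [h1]
  refine (List.IsSuffix.isInfix ⟨0 :: List.replicate (m - q) 1, ?_⟩)
  rw [W]
  simp only [List.cons_append, List.cons.injEq, true_and, ← List.append_assoc,
    ← List.replicate_add]
  rw [Nat.sub_add_cancel hqm]

lemma isType3MAW_W {m q : ℕ} (hq : 1 ≤ q) (hqm : q < m) : IsType3MAW (W q) (W m) := by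
  obtain ⟨k, rfl⟩ : ∃ k, q = k + 1 := ⟨q - 1, by omega⟩
  refine ⟨⟨by simp [W], W_not_infix (by omega), ?_⟩, rleSize_W hq, 0, 2,
    List.replicate (k+1) 1, by simp, by simp [W], by rw [List.replicate_succ]; simp, ?_⟩
  · intro v hv hne
    rcases infix_dropLast_or_tail hv hne with h | h
    · exact h.trans (W_dropLast_infix (by omega))
    · exact h.trans (W_tail_infix (by omega))
  · rw [List.replicate_succ']
    simp

lemma type3_char {m : ℕ} (hm : 2 ≤ m) {w : List ℕ} (h : IsType3MAW w (W m)) :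
    ∃ q, 1 ≤ q ∧ q ≤ m - 1 ∧ w = W q := by
  obtain ⟨⟨hne, hninf, hsub⟩, _, a, b, u, hu, hw, hha, hhb⟩ := h
  obtain ⟨k, hk⟩ : ∃ k, u.length = k + 1 :=
    ⟨u.length - 1, by have := List.length_pos_iff.mpr hu; omega⟩
  have hL : w.length = k + 3 := by simp [hw, hk]
  set f : ℕ → ℕ := fun i => w.getD i 0 with hf
  have hfs : ∀ i, i < w.length → w[i]? = some (f i) := by
    intro i hi
    rw [List.getElem?_eq_getElem hi]
    exact congrArg some (List.getD_eq_getElem _ _ hi).symm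
  have e1 : ∀ j, j < w.length → List.drop j w = f j :: List.drop (j+1) w := by
    intro j hj
    rw [List.drop_eq_getElem_cons (i := j) hj]
    congr 1
    exact (List.getD_eq_getElem _ _ hj).symm
  have key : ∀ i, i + 1 < w.length →
      (f i = 0 ∧ f (i+1) = 1) ∨ (f i = 1 ∧ f (i+1) = 1) ∨ (f i = 1 ∧ f (i+1) = 2) := by
    intro i h2
    have hinf : [f i, f (i+1)] <:+: w := by
      refine ⟨w.take i, w.drop (i+2), ?_⟩
      rw [List.append_assoc]
      conv_rhs => rw [← List.take_append_drop i w]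
      congr 1
      rw [e1 i (by omega), e1 (i+1) (by omega)]
      rfl
    refine pair_char (by omega) (hsub _ hinf ?_)
    intro hcon
    have := congrArg List.length hcon
    simp at this
    omega
  have mid : ∀ i, 1 ≤ i → i + 1 < w.length → f i = 1 := by
    intro i h1 h2
    obtain ⟨j, rfl⟩ : ∃ j, i = j + 1 := ⟨i - 1, by omega⟩
    have pA := key j (by omega)
    have pB := key (j+1) h2
    omega
  have hgetu : ∀ j, j < u.length → (u ++ [b]).getD j 0 = u.getD j 0 := by
    intro j hj
    rw [List.getD_eq_getElem?_getD, List.getElem?_append, if_pos hj,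
      ← List.getD_eq_getElem?_getD]
  -- endpoints
  have hf0 : f 0 = a := by simp [hf, hw]
  have hf1 : f 1 = u.getD 0 0 := by
    rw [hf]
    simp only [hw, List.cons_append, List.getD_cons_succ]
    exact hgetu 0 (by omega)
  have hfk2 : f (k + 2) = b := by
    rw [hf]
    simp only [hw, List.cons_append, List.getD_cons_succ]
    rw [List.getD_eq_getElem?_getD, List.getElem?_append_right (by omega)]
    simp [hk]
  have hfk1 : f (k + 1) = u.getD k 0 := by
    rw [hf]
    simp only [hw, List.cons_append, List.getD_cons_succ]
    exact hgetu k (by omega)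
  have hu0 : u.head? = some (u.getD 0 0) := by
    rw [List.head?_eq_getElem?, List.getElem?_eq_getElem (by omega : 0 < u.length),
      List.getD_eq_getElem _ _ (by omega : 0 < u.length)]
  have hul : u.getLast? = some (u.getD k 0) := by
    rw [List.getLast?_eq_getElem?, hk]
    simp only [Nat.add_sub_cancel]
    rw [List.getElem?_eq_getElem (by omega : k < u.length),
      List.getD_eq_getElem _ _ (by omega : k < u.length)]
  have hne01 : f 0 ≠ f 1 := by
    rw [hf0, hf1]
    intro hcon
    exact hha (by rw [hu0, hcon])
  have hnekk : f (k+1) ≠ f (k+2) := by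
    rw [hfk1, hfk2]
    intro hcon
    exact hhb (by rw [hul, hcon])
  have h1v : f 1 = 1 := mid 1 le_rfl (by omega)
  have h0v : f 0 = 0 := by
    have pA := key 0 (by omega)
    omega
  have hk1v : f (k+1) = 1 := mid (k+1) (by omega) (by omega)
  have hk2v : f (k+2) = 2 := by
    rcases key (k+1) (by omega) with ⟨h1', h2'⟩ | ⟨h1', h2'⟩ | ⟨h1', h2'⟩
    · rw [hk1v] at h1'; omega
    · exact absurd (by rw [hk1v, h2'] : f (k+1) = f (k+2)) hnekk
    · exact h2'
  have hmidv : ∀ i, 1 ≤ i → i ≤ k + 1 → f i = 1 := fun i h1 h2 => mid i h1 (by omega)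
  -- w = W (k+1)
  have hwW : w = W (k+1) := by
    apply List.ext_getElem?
    intro i
    rw [getElem?_W]
    by_cases hi0 : i = 0
    · subst hi0
      rw [hfs 0 (by omega), if_pos rfl, h0v]
    · by_cases hik : i ≤ k + 1
      · rw [hfs i (by omega), if_neg hi0, if_pos hik, hmidv i (by omega) hik]
      · by_cases hik2 : i = k + 2
        · subst hik2
          rw [hfs _ (by omega), if_neg (by omega), if_neg (by omega), if_pos rfl, hk2v]
        · rw [List.getElem?_eq_none (by omega), if_neg hi0, if_neg hik, if_neg (by omega)]
  -- bounds
  have htail : w.tail <:+: W m := by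
    refine hsub _ (List.tail_suffix w).isInfix ?_
    intro hcon
    have := congrArg List.length hcon
    rw [List.length_tail] at this
    omega
  have hcount : k + 1 ≤ m := by
    have hs := htail.sublist.count_le 1
    have h1 : w.tail = List.replicate (k+1) 1 ++ [2] := by rw [hwW]; rfl
    rw [h1] at hs
    simpa [W, List.count_append, List.count_replicate_self] using hs
  have hqm : k + 1 ≠ m := by
    intro hcon
    exact hninf (by rw [hwW, hcon])
  exact ⟨k + 1, by omega, by omega, hwW⟩

end MAWaux

theorem stmt2 (n : ℕ) (hn : 4 ≤ n) :
    ∃ T : List ℕ, T.length = n ∧ rleSize T = 3 ∧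
      {w : List ℕ | IsType3MAW w T}.ncard = n - 3 := by
  refine ⟨MAWaux.W (n - 2), ?_, MAWaux.rleSize_W (by omega), ?_⟩
  · rw [MAWaux.W_length]; omega
  · have hset : {w : List ℕ | IsType3MAW w (MAWaux.W (n - 2))}
        = MAWaux.W '' Set.Icc 1 (n - 3) := by
      ext w
      simp only [Set.mem_setOf_eq, Set.mem_image, Set.mem_Icc]
      constructor
      · intro h
        obtain ⟨q, h1, h2, rfl⟩ := MAWaux.type3_char (by omega) h
        exact ⟨q, ⟨h1, by omega⟩, rfl⟩
      · rintro ⟨q, ⟨h1, h2⟩, rfl⟩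
        exact MAWaux.isType3MAW_W h1 (by omega)
    rw [hset, Set.ncard_image_of_injOn, ← Finset.coe_Icc, Set.ncard_coe_finset,
      Nat.card_Icc]
    · omega
    · intro x _ y _ hxy
      have := congrArg List.length hxy
      simpa [MAWaux.W_length] using this
end

section
/- Let T be a string and define, for a bridge w and t ≥ 1, K^{(t)}(w) = { bridge substrings w' of T : w'^{(t)} = w } and K₊^{(t)}(w) = { w' ∈ K^{(t)}(w) : |K(w')| ≥ 2 }. Then for any bridge w with |K(w)| ≥ 2 and any t ≥ 1: |K(w)| + Σ_{i=1}^{t} Σ_{z ∈ K₊^{(i)}(w)} |K(z)| ≤ #w + Σ_{i=1}^{t} |K₊^{(i)}(w)|. -/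
set_option linter.unusedSectionVars false

section Aux

variable {α : Type*} [DecidableEq α]

/-! ### Elementary list lemmas -/

private lemma repl_cons_swap (a : α) : ∀ (e : ℕ) (l : List α),
    a :: (List.replicate e a ++ l) = List.replicate e a ++ a :: l := by
  intro e
  induction e with
  | zero => simp
  | succ n ih => intro l; simp [List.replicate_succ, ih]

private lemma takeWhile_replicate_append {a : α} {Y : List α} (h : Y.head? ≠ some a) (e : ℕ) :
    (List.replicate e a ++ Y).takeWhile (· == a) = List.replicate e a := by
  induction e with
  | zero =>
    cases Y with
    | nil => simp
    | cons y Y' =>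
      have : y ≠ a := by simpa using h
      simp [List.takeWhile_cons, this]
  | succ n ih => simp [List.replicate_succ, List.takeWhile_cons, ih]

private lemma head?_dropWhile_beq (a : α) (l : List α) :
    (l.dropWhile (· == a)).head? ≠ some a := by
  induction l with
  | nil => simp
  | cons x l ih =>
    by_cases h : x = a
    · simpa [List.dropWhile_cons, h] using ih
    · simp [List.dropWhile_cons, h]

private lemma truncHead_cons (a : α) (u : List α) :
    truncHead (a :: u) = a :: u.dropWhile (· == a) := rfl

private lemma truncHead_spec (a : α) (u : List α) :
    ∃ e, a :: u = List.replicate e a ++ truncHead (a :: u) := by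
  refine ⟨(u.takeWhile (· == a)).length, ?_⟩
  have h1 : u.takeWhile (· == a) = List.replicate (u.takeWhile (· == a)).length a :=
    List.eq_replicate_of_mem (fun b hb => by simpa using List.mem_takeWhile_imp hb)
  rw [truncHead_cons]
  conv_lhs => rw [← List.takeWhile_append_dropWhile (p := (· == a)) (l := u), h1]
  exact repl_cons_swap _ _ _

private lemma dropHeadRun_cons {c : α} {u : List α} (h : u.head? ≠ some c) :
    dropHeadRun (c :: u) = u := by
  cases u with
  | nil => simp [dropHeadRun]
  | cons x u' =>
    have hx : x ≠ c := by simpa using h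
    simp [dropHeadRun, List.dropWhile_cons, hx]

/-- Uniqueness of the `X ++ c :: replicate e a` decomposition when `c ≠ a`. -/
private lemma rep_last_unique {X1 X2 : List α} {c1 c2 a : α} {e1 e2 : ℕ}
    (h : X1 ++ c1 :: List.replicate e1 a = X2 ++ c2 :: List.replicate e2 a)
    (h1 : c1 ≠ a) (h2 : c2 ≠ a) : X1 = X2 ∧ c1 = c2 ∧ e1 = e2 := by
  have hrev : List.replicate e1 a ++ c1 :: X1.reverse
      = List.replicate e2 a ++ c2 :: X2.reverse := by
    have := congrArg List.reverse h
    simpa [List.reverse_append, List.reverse_cons, List.reverse_replicate,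
      List.append_assoc] using this
  have htw : List.replicate e1 a = List.replicate e2 a := by
    have t1 := takeWhile_replicate_append (a := a) (Y := c1 :: X1.reverse) (by simpa using h1) e1
    have t2 := takeWhile_replicate_append (a := a) (Y := c2 :: X2.reverse) (by simpa using h2) e2
    rw [← t1, ← t2, hrev]
  have he : e1 = e2 := by
    have := congrArg List.length htw; simpa using this
  subst he
  have := List.append_cancel_left hrev
  have hc : c1 = c2 := by injection this
  have hX : X1.reverse = X2.reverse := by injection this
  exact ⟨List.reverse_injective hX, hc, rfl⟩

/-- Uniqueness of the `replicate f b ++ d :: B` decomposition when `d ≠ b`. -/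
private lemma rep_head_unique {B1 B2 : List α} {d1 d2 b : α} {f1 f2 : ℕ}
    (h : List.replicate f1 b ++ d1 :: B1 = List.replicate f2 b ++ d2 :: B2)
    (h1 : d1 ≠ b) (h2 : d2 ≠ b) : B1 = B2 ∧ d1 = d2 ∧ f1 = f2 := by
  have htw : List.replicate f1 b = List.replicate f2 b := by
    have t1 := takeWhile_replicate_append (a := b) (Y := d1 :: B1) (by simpa using h1) f1
    have t2 := takeWhile_replicate_append (a := b) (Y := d2 :: B2) (by simpa using h2) f2
    rw [← t1, ← t2, h]
  have hf : f1 = f2 := by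
    have := congrArg List.length htw; simpa using this
  subst hf
  have := List.append_cancel_left h
  have hd : d1 = d2 := by injection this
  have hB : B1 = B2 := by injection this
  exact ⟨hB, hd, rfl⟩

end Aux


section Dec

variable {α : Type*} [DecidableEq α]

private lemma getElem?_one_cons (x : α) (y : List α) : (x :: y)[1]? = y.head? := by
  cases y <;> simp

private lemma getElem?_append_lt {l₁ l₂ : List α} {n : ℕ} (h : n < l₁.length) :
    (l₁ ++ l₂)[n]? = l₁[n]? := by
  rw [List.getElem?_append, if_pos h]

private lemma frontDiff_of_prefix {p q : List α} (hp : 2 ≤ p.length)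
    (h : (p ++ q)[0]? ≠ (p ++ q)[1]?) : p[0]? ≠ p[1]? := by
  rwa [getElem?_append_lt (by omega), getElem?_append_lt (by omega)] at h

private lemma isBridge_iff {w : List α} :
    IsBridge w ↔ 2 ≤ w.length ∧ w[0]? ≠ w[1]? ∧ w.reverse[0]? ≠ w.reverse[1]? := by
  constructor
  · rintro ⟨h1, h2, h3⟩
    refine ⟨h1, h2, ?_⟩
    rw [List.getElem?_reverse (by omega), List.getElem?_reverse (by omega)]
    simpa [show w.length - 1 - 1 = w.length - 2 by omega] using h3.symm
  · rintro ⟨h1, h2, h3⟩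
    refine ⟨h1, h2, ?_⟩
    rw [List.getElem?_reverse (by omega), List.getElem?_reverse (by omega)] at h3
    simpa [show w.length - 1 - 1 = w.length - 2 by omega] using h3.symm

private lemma head?_ne_of_bridge {c : α} {s : List α} (h : IsBridge (c :: s)) :
    s.head? ≠ some c := by
  have h2 := h.2.1
  rw [getElem?_one_cons] at h2
  simp only [List.getElem?_cons_zero] at h2
  exact h2.symm

/-- The key structural decomposition of a bridge under `bridgeReduce`. -/
private lemma bridgeReduce_decomp {z' : List α} (hb : IsBridge z')
    (hlen : 2 ≤ (bridgeReduce z').length) :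
    ∃ (c d a b : α) (e f : ℕ),
      (bridgeReduce z').head? = some a ∧ (bridgeReduce z').getLast? = some b ∧
      c ≠ a ∧ d ≠ b ∧
      z' = c :: (List.replicate e a ++ bridgeReduce z' ++ (List.replicate f b ++ [d])) ∧
      IsBridge (bridgeReduce z') := by
  have hr : ¬ rleSize z' ≤ 2 := by
    intro h
    rw [bridgeReduce, if_pos h] at hlen
    simp at hlen
  have hz : bridgeReduce z' = (leftReduce ((leftReduce z').reverse)).reverse := by
    rw [bridgeReduce, if_neg hr]
  obtain ⟨c, s, rfl⟩ : ∃ c s, z' = c :: s := by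
    cases z' with
    | nil => exact absurd hb.1 (by simp)
    | cons c s => exact ⟨c, s, rfl⟩
  have hhd : s.head? ≠ some c := head?_ne_of_bridge hb
  obtain ⟨x, u, rfl⟩ : ∃ x u, s = x :: u := by
    cases s with
    | nil => exact absurd hb.1 (by simp)
    | cons x u => exact ⟨x, u, rfl⟩
  have hxc : x ≠ c := by simpa using hhd
  have hdrop : dropHeadRun (c :: x :: u) = x :: u := by
    simp [dropHeadRun, List.dropWhile_cons, hxc]
  obtain ⟨m, hm_def⟩ : ∃ m, u.dropWhile (· == x) = m := ⟨_, rfl⟩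
  have hL : leftReduce (c :: x :: u) = x :: m := by
    rw [leftReduce, hdrop, truncHead_cons, hm_def]
  have hm : m.head? ≠ some x := hm_def ▸ head?_dropWhile_beq x u
  obtain ⟨e, he⟩ := truncHead_spec x u
  rw [truncHead_cons, hm_def] at he
  have hmne : m ≠ [] := by
    intro hnil
    apply absurd hlen
    rw [hz, hL, hnil]
    simp [leftReduce, dropHeadRun, truncHead]
  obtain ⟨m0, mt, rfl⟩ : ∃ a t, m = a :: t := by
    cases m with
    | nil => exact absurd rfl hmne
    | cons a t => exact ⟨a, t, rfl⟩
  obtain ⟨d, r, hdr⟩ : ∃ d r, (x :: m0 :: mt).reverse = d :: r := by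
    cases hq : (x :: m0 :: mt).reverse with
    | nil => exact absurd (congrArg List.length hq) (by simp)
    | cons d r => exact ⟨d, r, rfl⟩
  have hrne : r ≠ [] := by
    intro hnil
    have hl := congrArg List.length hdr
    rw [hnil] at hl
    simp at hl
  -- front-diff of (x :: m).reverse
  have hz'eq : c :: x :: u = c :: (List.replicate e x ++ (x :: m0 :: mt)) := by rw [← he]
  have hz'rev : (c :: x :: u).reverse
      = (x :: m0 :: mt).reverse ++ ((List.replicate e x).reverse ++ [c]) := by
    rw [hz'eq]; simp [List.reverse_append]
  have hfd : ((x :: m0 :: mt).reverse)[0]? ≠ ((x :: m0 :: mt).reverse)[1]? := by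
    apply frontDiff_of_prefix (by simp)
    rw [← hz'rev]
    exact (isBridge_iff.1 hb).2.2
  have hrd : r.head? ≠ some d := by
    rw [hdr] at hfd
    simp only [List.getElem?_cons_zero, getElem?_one_cons] at hfd
    exact hfd.symm
  obtain ⟨y, v, rfl⟩ : ∃ y v, r = y :: v := by
    cases r with
    | nil => exact absurd rfl hrne
    | cons y v => exact ⟨y, v, rfl⟩
  have hdy : d ≠ y := by
    intro hh; exact hrd (by simp [hh])
  have hLR : leftReduce ((x :: m0 :: mt).reverse) = truncHead (y :: v) := by
    rw [hdr, leftReduce, dropHeadRun_cons hrd]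
  obtain ⟨f, hf⟩ := truncHead_spec y v
  have hMv : (v.dropWhile (· == y)).head? ≠ some y := head?_dropWhile_beq y v
  have hMcons : truncHead (y :: v) = y :: v.dropWhile (· == y) := truncHead_cons y v
  have hzM : bridgeReduce (c :: x :: u) = (truncHead (y :: v)).reverse := by
    rw [hz, hL, hLR]
  have hLrec : x :: m0 :: mt
      = (truncHead (y :: v)).reverse ++ (List.replicate f y ++ [d]) :=
    calc x :: m0 :: mt = (d :: (y :: v)).reverse := by rw [← hdr, List.reverse_reverse]
    _ = (d :: (List.replicate f y ++ truncHead (y :: v))).reverse := by rw [← hf]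
    _ = (truncHead (y :: v)).reverse ++ (List.replicate f y ++ [d]) := by
        simp [List.reverse_append, List.reverse_replicate, List.append_assoc]
  have h2M : 2 ≤ (truncHead (y :: v)).reverse.length := by rw [← hzM]; exact hlen
  refine ⟨c, d, x, y, e, f, ?_, ?_, hxc.symm, hdy, ?_, ?_⟩
  · rw [hzM]
    have hhead : ((truncHead (y :: v)).reverse ++ (List.replicate f y ++ [d])).head?
        = (truncHead (y :: v)).reverse.head? := by
      cases hM : (truncHead (y :: v)).reverse with
      | nil => rw [hM] at h2M; simp at h2M
      | cons p q => simp [hM]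
    rw [← hLrec] at hhead
    rw [← hhead]
    simp
  · rw [hzM, List.getLast?_reverse, hMcons]
    simp
  · rw [hzM]
    calc c :: x :: u = c :: (List.replicate e x ++ (x :: m0 :: mt)) := hz'eq
    _ = c :: (List.replicate e x ++ ((truncHead (y :: v)).reverse ++ (List.replicate f y ++ [d]))) := by
        rw [← hLrec]
    _ = c :: (List.replicate e x ++ (truncHead (y :: v)).reverse ++ (List.replicate f y ++ [d])) := by
        rw [List.append_assoc]
  · rw [hzM]
    apply isBridge_iff.2
    refine ⟨h2M, ?_, ?_⟩
    · apply frontDiff_of_prefix h2M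
      rw [← hLrec]
      simp only [List.getElem?_cons_zero, getElem?_one_cons, List.head?_cons]
      exact fun hh => hm (by rw [List.head?_cons]; exact hh.symm)
    · rw [List.reverse_reverse, hMcons]
      simp only [List.getElem?_cons_zero, getElem?_one_cons]
      exact hMv.symm

end Dec



section Occ

variable {α : Type*} [DecidableEq α]

/-- Occurrence positions as a finset. -/
private def OccF (T z : List α) : Finset ℕ :=
  (Finset.range (T.length + 1)).filter
    (fun i => (T.drop i).take z.length = z ∧ i + z.length ≤ T.length)

private lemma countOcc_eq (z T : List α) : countOcc z T = (OccF T z).card := rfl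

private lemma mem_OccF {T z : List α} {q : ℕ} :
    q ∈ OccF T z ↔ ∃ A B, T = A ++ z ++ B ∧ A.length = q := by
  constructor
  · intro h
    have h' := Finset.mem_filter.1 h
    obtain ⟨h1, h2⟩ := h'.2
    refine ⟨T.take q, T.drop (q + z.length), ?_, by simp; omega⟩
    conv_lhs => rw [← List.take_append_drop q T]
    rw [List.append_assoc]
    congr 1
    conv_lhs => rw [← List.take_append_drop z.length (T.drop q)]
    rw [h1, List.drop_drop]
  · rintro ⟨A, B, rfl, rfl⟩
    apply Finset.mem_filter.2
    refine ⟨Finset.mem_range.2 (by simp [List.length_append]; try omega), ?_,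
      by simp [List.length_append]; try omega⟩
    rw [List.append_assoc, List.drop_left, List.take_left]

private lemma countOcc_pos {T z : List α} (h : z <:+: T) : 1 ≤ countOcc z T := by
  obtain ⟨A, B, hAB⟩ := h
  rw [countOcc_eq]
  refine Finset.card_pos.2 ⟨A.length, mem_OccF.2 ⟨A, B, ?_, rfl⟩⟩
  rw [← hAB, List.append_assoc]

private lemma mem_KFin {T w z : List α} :
    z ∈ KFin T w ↔ z <:+: T ∧ IsBridge z ∧ bridgeReduce z = w := by
  constructor
  · intro h; exact (Finset.mem_filter.1 h).2
  · intro h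
    exact Finset.mem_filter.2 ⟨List.mem_toFinset.2 (List.mem_sublists.2 h.1.sublist), h⟩

private lemma mem_KIter {T w z : List α} {t : ℕ} :
    z ∈ KIter T w t ↔ z <:+: T ∧ IsBridge z ∧ bridgeReduce^[t] z = w := by
  constructor
  · intro h; exact (Finset.mem_filter.1 h).2
  · intro h
    exact Finset.mem_filter.2 ⟨List.mem_toFinset.2 (List.mem_sublists.2 h.1.sublist), h⟩

/-- The master counting inequality: `∑_{z ∈ K(w)} #z ≤ #w`. -/
private lemma sum_countOcc_le {T w : List α} (hw : IsBridge w) :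
    ∑ z ∈ KFin T w, countOcc z T ≤ countOcc w T := by
  obtain ⟨a, w2, rfl⟩ : ∃ a w2, w = a :: w2 := by
    cases w with
    | nil => exact absurd hw.1 (by simp)
    | cons a w2 => exact ⟨a, w2, rfl⟩
  obtain ⟨a2, w3, rfl⟩ : ∃ a2 w3, w2 = a2 :: w3 := by
    cases w2 with
    | nil => exact absurd hw.1 (by simp)
    | cons a2 w3 => exact ⟨a2, w3, rfl⟩
  have hw2 : (a :: a2 :: w3).head? = some a := rfl
  have ha2 : a2 ≠ a := by
    have := head?_ne_of_bridge hw
    simpa using this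
  obtain ⟨b, hwb⟩ : ∃ b, (a :: a2 :: w3).getLast? = some b := by
    cases hq : (a :: a2 :: w3).getLast? with
    | none => exact absurd (List.getLast?_eq_none_iff.1 hq) (by simp)
    | some b => exact ⟨b, rfl⟩
  have key : ∀ z ∈ KFin T (a :: a2 :: w3), ∀ q ∈ OccF T z,
      ∃ (c d : α) (e f : ℕ) (A B : List α),
        c ≠ a ∧ d ≠ b ∧
        z = c :: (List.replicate e a ++ (a :: a2 :: w3) ++ (List.replicate f b ++ [d])) ∧
        T = (A ++ c :: List.replicate e a) ++ (a :: a2 :: w3)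
              ++ (List.replicate f b ++ d :: B) ∧
        A.length = q ∧
        q + (z.tail.takeWhile (· == a)).length = q + e + 1 := by
    intro z hz q hq
    obtain ⟨hinf, hbz, hred⟩ := mem_KFin.1 hz
    obtain ⟨c, d, a', b', e, f, ha', hb', hca, hdb, hzeq, _⟩ :=
      bridgeReduce_decomp hbz (by rw [hred]; exact hw.1)
    rw [hred] at ha' hb' hzeq
    have haa : a = a' := by rw [hw2] at ha'; exact Option.some.inj ha'
    have hbb : b = b' := by rw [hwb] at hb'; exact Option.some.inj hb'
    subst haa
    subst hbb
    obtain ⟨A, B, hT, hA⟩ := mem_OccF.1 hq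
    refine ⟨c, d, e, f, A, B, hca, hdb, hzeq, ?_, hA, ?_⟩
    · rw [hT, hzeq]
      simp only [List.cons_append, List.append_assoc, List.singleton_append, List.nil_append]
    · have htail : z.tail
          = List.replicate (e + 1) a ++ (a2 :: w3 ++ (List.replicate f b ++ [d])) := by
        rw [hzeq]
        simp only [List.tail_cons]
        rw [List.replicate_succ', List.append_assoc]
        simp [List.append_assoc]
      have hlen2 : (z.tail.takeWhile (· == a)).length = e + 1 := by
        rw [htail, takeWhile_replicate_append (by simp [ha2])]
        simp
      omega
  rw [countOcc_eq]
  have hsum : ∑ z ∈ KFin T (a :: a2 :: w3), countOcc z T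
      = ((KFin T (a :: a2 :: w3)).sigma (fun z => OccF T z)).card := by
    rw [Finset.card_sigma]
    exact Finset.sum_congr rfl fun z _ => countOcc_eq z T
  rw [hsum]
  apply Finset.card_le_card_of_injOn
    (fun p => p.2 + (p.1.tail.takeWhile (· == a)).length)
  · rintro ⟨z, q⟩ hp
    have hzq := Finset.mem_sigma.1 hp
    obtain ⟨c, d, e, f, A, B, hca, hdb, hzeq, hT, hA, hoff⟩ := key z hzq.1 q hzq.2
    simp only
    rw [hoff]
    apply mem_OccF.2
    exact ⟨A ++ c :: List.replicate e a, List.replicate f b ++ d :: B, hT,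
      by simp [List.length_append]; omega⟩
  · rintro ⟨z1, q1⟩ hp1 ⟨z2, q2⟩ hp2 heq
    simp only [Finset.coe_sigma, Set.mem_sigma_iff] at hp1 hp2
    obtain ⟨c1, d1, e1, f1, A1, B1, hca1, hdb1, hzeq1, hT1, hA1, hoff1⟩ :=
      key z1 (by simpa using hp1.1) q1 (by simpa using hp1.2)
    obtain ⟨c2, d2, e2, f2, A2, B2, hca2, hdb2, hzeq2, hT2, hA2, hoff2⟩ :=
      key z2 (by simpa using hp2.1) q2 (by simpa using hp2.2)
    simp only at heq
    rw [hoff1, hoff2] at heq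
    have hPlen : (A1 ++ c1 :: List.replicate e1 a).length
        = (A2 ++ c2 :: List.replicate e2 a).length := by
      simp only [List.length_append, List.length_cons, List.length_replicate, hA1, hA2]
      omega
    have hTT : (A1 ++ c1 :: List.replicate e1 a)
          ++ ((a :: a2 :: w3) ++ (List.replicate f1 b ++ d1 :: B1))
        = (A2 ++ c2 :: List.replicate e2 a)
          ++ ((a :: a2 :: w3) ++ (List.replicate f2 b ++ d2 :: B2)) := by
      have g1 : (A1 ++ c1 :: List.replicate e1 a)
            ++ ((a :: a2 :: w3) ++ (List.replicate f1 b ++ d1 :: B1)) = T := by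
        rw [hT1]; simp [List.append_assoc]
      have g2 : (A2 ++ c2 :: List.replicate e2 a)
            ++ ((a :: a2 :: w3) ++ (List.replicate f2 b ++ d2 :: B2)) = T := by
        rw [hT2]; simp [List.append_assoc]
      rw [g1, g2]
    obtain ⟨hP, hrest⟩ := List.append_inj hTT hPlen
    have hQ : List.replicate f1 b ++ d1 :: B1 = List.replicate f2 b ++ d2 :: B2 :=
      List.append_cancel_left hrest
    obtain ⟨hAeq, hceq, heeq⟩ := rep_last_unique hP hca1 hca2
    obtain ⟨hBeq, hdeq, hfeq⟩ := rep_head_unique hQ hdb1 hdb2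
    have hq12 : q1 = q2 := by rw [← hA1, ← hA2, hAeq]
    have hz12 : z1 = z2 := by rw [hzeq1, hzeq2, hceq, heeq, hfeq, hdeq]
    subst hq12
    subst hz12
    rfl

end Occ



section Main

variable {α : Type*} [DecidableEq α]

private lemma rleSize_le_length (w : List α) : rleSize w ≤ w.length :=
  (List.destutter_sublist _ _).length_le

private lemma bridgeReduce_nil : bridgeReduce ([] : List α) = [] := by
  simp [bridgeReduce, rleSize]

private lemma length_ge_of_reduce {y : List α} (h : bridgeReduce y ≠ []) : 2 ≤ y.length := by
  have h1 : ¬ rleSize y ≤ 2 := fun hh => h (by rw [bridgeReduce, if_pos hh])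
  have h2 := rleSize_le_length y
  omega

private lemma iterate_bridge {T x : List α} (hx : IsBridge x) (hinf : x <:+: T) :
    ∀ j, 2 ≤ (bridgeReduce^[j] x).length →
      IsBridge (bridgeReduce^[j] x) ∧ bridgeReduce^[j] x <:+: T := by
  intro j
  induction j with
  | zero => intro _; exact ⟨hx, hinf⟩
  | succ n ih =>
    intro h2
    rw [Function.iterate_succ_apply'] at h2 ⊢
    have hne : bridgeReduce (bridgeReduce^[n] x) ≠ [] := by
      intro hh; rw [hh] at h2; simp at h2
    have hylen : 2 ≤ (bridgeReduce^[n] x).length := length_ge_of_reduce hne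
    obtain ⟨hby, hiy⟩ := ih hylen
    obtain ⟨c, d, a, b, e, f, _, _, _, _, hdec, hbr⟩ := bridgeReduce_decomp hby h2
    refine ⟨hbr, List.IsInfix.trans ?_ hiy⟩
    refine ⟨c :: List.replicate e a, List.replicate f b ++ [d], ?_⟩
    conv_rhs => rw [hdec]
    simp [List.append_assoc]

private lemma KIter_succ_eq {T w : List α} (hw : w ≠ []) (i : ℕ) :
    KIter T w (i + 1) = (KFin T w).biUnion (fun z => KIter T z i) := by
  ext z'
  simp only [Finset.mem_biUnion]
  constructor
  · intro h
    obtain ⟨hinf, hbz, hred⟩ := mem_KIter.1 h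
    rw [Function.iterate_succ_apply'] at hred
    have hlen : 2 ≤ (bridgeReduce^[i] z').length := by
      apply length_ge_of_reduce; rw [hred]; exact hw
    obtain ⟨hby, hiy⟩ := iterate_bridge hbz hinf i hlen
    exact ⟨bridgeReduce^[i] z', mem_KFin.2 ⟨hiy, hby, hred⟩, mem_KIter.2 ⟨hinf, hbz, rfl⟩⟩
  · rintro ⟨z, hz, hz'⟩
    obtain ⟨hinf, hbz, hred⟩ := mem_KIter.1 hz'
    obtain ⟨_, _, hzw⟩ := mem_KFin.1 hz
    exact mem_KIter.2 ⟨hinf, hbz, by rw [Function.iterate_succ_apply', hred, hzw]⟩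

private lemma KplusIter_succ_eq {T w : List α} (hw : w ≠ []) (i : ℕ) :
    KplusIter T w (i + 1) = (KFin T w).biUnion (fun z => KplusIter T z i) := by
  rw [KplusIter, KIter_succ_eq hw i, Finset.filter_biUnion]
  rfl

private lemma KplusIter_disj_elem (T : List α) (i : ℕ) {z1 z2 : List α}
    (hne : z1 ≠ z2) : Disjoint (KplusIter T z1 i) (KplusIter T z2 i) := by
  refine Finset.disjoint_left.2 (fun x hx1 hx2 => hne ?_)
  have m1 := mem_KIter.1 (Finset.mem_filter.1 hx1).1
  have m2 := mem_KIter.1 (Finset.mem_filter.1 hx2).1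
  rw [← m1.2.2, ← m2.2.2]

private lemma sum_Icc_succ (F : ℕ → ℕ) (t : ℕ) :
    ∑ i ∈ Finset.Icc 1 (t + 1), F i = F 1 + ∑ i ∈ Finset.Icc 1 t, F (i + 1) := by
  have h : Finset.Icc 1 (t + 1) = insert 1 ((Finset.Icc 1 t).image (· + 1)) := by
    ext n
    simp only [Finset.mem_Icc, Finset.mem_insert, Finset.mem_image]
    constructor
    · rintro ⟨ha, hb⟩
      rcases Nat.eq_or_lt_of_le ha with h | h
      · exact Or.inl h.symm
      · exact Or.inr ⟨n - 1, ⟨by omega, by omega⟩, by omega⟩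
    · rintro (rfl | ⟨x, ⟨hx1, hx2⟩, rfl⟩) <;> omega
  rw [h, Finset.sum_insert (by
      simp only [Finset.mem_image, Finset.mem_Icc, not_exists]
      intro x
      omega),
    Finset.sum_image (by intro x _ y _ hxy; simp only at hxy; omega)]

private lemma KplusIter_one (T w : List α) :
    KplusIter T w 1 = (KFin T w).filter (fun z => 2 ≤ (KFin T z).card) := by
  have h : KIter T w 1 = KFin T w := by
    ext z
    rw [mem_KIter, mem_KFin, Function.iterate_one]
  rw [KplusIter, h]

private lemma Dlem (T : List α) : ∀ (t : ℕ) (w : List α), IsBridge w →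
    (KFin T w).card + ∑ i ∈ Finset.Icc 1 t, ∑ z ∈ KplusIter T w i, (KFin T z).card ≤
      (∑ z ∈ KFin T w, countOcc z T) + ∑ i ∈ Finset.Icc 1 t, (KplusIter T w i).card := by
  intro t
  induction t with
  | zero =>
    intro w hw
    simp only [show Finset.Icc 1 0 = ∅ from rfl, Finset.sum_empty, Nat.add_zero]
    calc (KFin T w).card = ∑ _z ∈ KFin T w, 1 := by simp
    _ ≤ ∑ z ∈ KFin T w, countOcc z T :=
        Finset.sum_le_sum (fun z hz => countOcc_pos (mem_KFin.1 hz).1)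
  | succ t ih =>
    intro w hw
    have hwne : w ≠ [] := by
      intro hh; rw [hh] at hw; exact absurd hw.1 (by simp)
    rw [sum_Icc_succ (fun i => ∑ z ∈ KplusIter T w i, (KFin T z).card) t,
        sum_Icc_succ (fun i => (KplusIter T w i).card) t]
    have h1 : ∀ i ∈ Finset.Icc 1 t,
        ∑ z' ∈ KplusIter T w (i + 1), (KFin T z').card
          = ∑ z ∈ KFin T w, ∑ z' ∈ KplusIter T z i, (KFin T z').card := by
      intro i _
      rw [KplusIter_succ_eq hwne i]
      exact Finset.sum_biUnion (fun z1 _ z2 _ hne => KplusIter_disj_elem T i hne)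
    have h2 : ∀ i ∈ Finset.Icc 1 t,
        (KplusIter T w (i + 1)).card = ∑ z ∈ KFin T w, (KplusIter T z i).card := by
      intro i _
      rw [KplusIter_succ_eq hwne i]
      exact Finset.card_biUnion (fun z1 _ z2 _ hne => KplusIter_disj_elem T i hne)
    have e1 : ∑ i ∈ Finset.Icc 1 t, ∑ z' ∈ KplusIter T w (i + 1), (KFin T z').card
        = ∑ z ∈ KFin T w, ∑ i ∈ Finset.Icc 1 t, ∑ z' ∈ KplusIter T z i, (KFin T z').card := by
      rw [Finset.sum_congr rfl h1]
      exact Finset.sum_comm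
    have e2 : ∑ i ∈ Finset.Icc 1 t, (KplusIter T w (i + 1)).card
        = ∑ z ∈ KFin T w, ∑ i ∈ Finset.Icc 1 t, (KplusIter T z i).card := by
      rw [Finset.sum_congr rfl h2]
      exact Finset.sum_comm
    rw [e1, e2, KplusIter_one]
    rw [Finset.sum_filter, Finset.card_filter, Finset.card_eq_sum_ones (KFin T w)]
    rw [← Finset.sum_add_distrib, ← Finset.sum_add_distrib,
        ← Finset.sum_add_distrib, ← Finset.sum_add_distrib]
    apply Finset.sum_le_sum
    intro z hz
    obtain ⟨hinf, hbz, _⟩ := mem_KFin.1 hz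
    have hIH := ih z hbz
    have hM := sum_countOcc_le (T := T) hbz
    have hpos := countOcc_pos hinf
    by_cases hc : 2 ≤ (KFin T z).card
    · simp only [if_pos hc]
      omega
    · simp only [if_neg hc]
      rcases Nat.eq_zero_or_pos (KFin T z).card with h0 | h0
      · have hKempty : KFin T z = ∅ := Finset.card_eq_zero.1 h0
        have hM0 : ∑ y ∈ KFin T z, countOcc y T = 0 := by rw [hKempty]; simp
        omega
      · omega

end Main


theorem stmt6 {α : Type*} [DecidableEq α] (T w : List α) (hb : IsBridge w)
    (h2 : 2 ≤ (KFin T w).card) (t : ℕ) (ht : 1 ≤ t) :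
    (KFin T w).card + ∑ i ∈ Finset.Icc 1 t, ∑ z ∈ KplusIter T w i, (KFin T z).card ≤
      countOcc w T + ∑ i ∈ Finset.Icc 1 t, (KplusIter T w i).card := by
  have hD := Dlem T t w hb
  have hM := sum_countOcc_le (T := T) hb
  omega
end

section
/- For any bridge substring w of T with |K(w)| ≥ 2, the total count Σ_{i=1}^{⌊m/2⌋−1} |K₊^{(i)}(w)| is at most #w, where m is the RLE size of T. (Interpretation: in the tree rooted at w whose children relation is given by K, every node in K₊ has at least 2 children, the number of leaves is at most #w, hence the number of branching nodes is at most #w.) -/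
namespace Aux
open List
variable {α : Type*} [DecidableEq α]

lemma takeWhile_beq_replicate (a : α) (l : List α) :
    l.takeWhile (· == a) = List.replicate (l.takeWhile (· == a)).length a := by
  rw [List.eq_replicate_iff]
  exact ⟨rfl, fun b hb => by simpa using List.mem_takeWhile_imp hb⟩

lemma replicate_append_cons (k : ℕ) (a : α) (s : List α) :
    List.replicate k a ++ a :: s = a :: (List.replicate k a ++ s) := by
  rw [show a :: s = [a] ++ s from rfl, ← List.append_assoc, ← List.replicate_succ',
    List.replicate_succ, List.cons_append]

lemma truncHead_suffix (l : List α) : truncHead l <:+ l := by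
  cases l with
  | nil => exact List.suffix_rfl
  | cons a t =>
    show a :: t.dropWhile (· == a) <:+ a :: t
    refine ⟨List.replicate (t.takeWhile (· == a)).length a, ?_⟩
    conv_rhs => rw [← List.takeWhile_append_dropWhile (p := (· == a)) (l := t),
      takeWhile_beq_replicate a t]
    rw [← replicate_append_cons]

lemma dropHeadRun_suffix (l : List α) : dropHeadRun l <:+ l := by
  cases l with
  | nil => exact List.suffix_rfl
  | cons a t => exact List.dropWhile_suffix _

lemma leftReduce_suffix (l : List α) : leftReduce l <:+ l :=
  (truncHead_suffix _).trans (dropHeadRun_suffix _)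

lemma bridgeReduce_infix (l : List α) : bridgeReduce l <:+: l := by
  unfold bridgeReduce
  split_ifs with h
  · exact List.nil_infix
  · have h1 : leftReduce ((leftReduce l).reverse) <:+ (leftReduce l).reverse :=
      leftReduce_suffix _
    have h2 : (leftReduce ((leftReduce l).reverse)).reverse <+: leftReduce l :=
      List.reverse_suffix.mp (by rwa [List.reverse_reverse])
    exact h2.isInfix.trans (leftReduce_suffix l).isInfix

lemma decomp_left (c a : α) (u : List α) (h : c ≠ a) :
    ∃ (k : ℕ) (d : List α), c :: a :: u = c :: (List.replicate k a ++ (a :: d)) ∧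
      leftReduce (c :: a :: u) = a :: d ∧ ∀ x ∈ d.head?, x ≠ a := by
  refine ⟨(u.takeWhile (· == a)).length, u.dropWhile (· == a), ?_, ?_, ?_⟩
  · conv_lhs => rw [show a :: u
        = a :: (u.takeWhile (· == a) ++ u.dropWhile (· == a)) by
          rw [List.takeWhile_append_dropWhile], takeWhile_beq_replicate]
    rw [← replicate_append_cons]
  · show truncHead (List.dropWhile (· == c) (c :: a :: u)) = _
    rw [List.dropWhile_cons_of_pos (by simp), List.dropWhile_cons_of_neg (by simp [Ne.symm h])]
    rfl
  · intro x hx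
    have := List.head?_dropWhile_not (· == a) u
    rw [hx] at this
    simpa using this

lemma head_two_of {w : List α} (hlen : 2 ≤ w.length) (h : w[0]? ≠ w[1]?) :
    ∃ c a u, w = c :: a :: u ∧ c ≠ a := by
  match w, hlen with
  | c :: a :: u, _ =>
    refine ⟨c, a, u, rfl, ?_⟩
    simpa using h

lemma bridge_head {w : List α} (hb : IsBridge w) : ∃ c a u, w = c :: a :: u ∧ c ≠ a :=
  head_two_of hb.1 hb.2.1

lemma bridge_rev_head {w : List α} (hb : IsBridge w) :
    ∃ c' b u', w.reverse = c' :: b :: u' ∧ c' ≠ b := by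
  obtain ⟨hlen, -, h2⟩ := hb
  refine head_two_of (by simpa using hlen) ?_
  rw [List.getElem?_reverse (by omega), List.getElem?_reverse (by omega)]
  simp only [Nat.sub_zero]
  rw [show w.length - 1 - 1 = w.length - 2 by omega]
  exact h2.symm

lemma isBridge_of_parts {w : List α} (h1 : ∃ c a u, w = c :: a :: u ∧ c ≠ a)
    (h2 : ∃ c' b u', w.reverse = c' :: b :: u' ∧ c' ≠ b) : IsBridge w := by
  obtain ⟨c, a, u, rfl, hca⟩ := h1
  obtain ⟨c', b, u', hrev, hcb⟩ := h2
  have hlen : 2 ≤ (c :: a :: u).length := by simp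
  refine ⟨hlen, by simpa using hca, ?_⟩
  have e0 : (c :: a :: u).reverse[0]? = some c' := by rw [hrev]; rfl
  have e1 : (c :: a :: u).reverse[1]? = some b := by rw [hrev]; simp
  rw [List.getElem?_reverse (by simp)] at e0
  rw [List.getElem?_reverse (by simp)] at e1
  simp only [Nat.sub_zero] at e0
  rw [show (c :: a :: u).length - 1 - 1 = (c :: a :: u).length - 2 by omega] at e1
  rw [e0, e1]
  simp [Ne.symm hcb]


lemma exists_cons_cons {l : List α} (h : 2 ≤ l.length) : ∃ x y v, l = x :: y :: v := by
  match l, h with | x :: y :: v, _ => exact ⟨x, y, v, rfl⟩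

lemma struct {z' z : List α} (hb' : IsBridge z') (hz : z ≠ []) (hr : bridgeReduce z' = z) :
    ∃ (c a b c' : α) (k r : ℕ),
      z.head? = some a ∧ z.getLast? = some b ∧ c ≠ a ∧ c' ≠ b ∧
      (∀ x ∈ z.tail.head?, x ≠ a) ∧ (∀ x ∈ z.reverse.tail.head?, x ≠ b) ∧
      z' = c :: (List.replicate k a ++ (z ++ (List.replicate r b ++ [c']))) ∧
      leftReduce z' = z ++ (List.replicate r b ++ [c']) := by
  unfold bridgeReduce at hr
  split_ifs at hr with hR
  · exact absurd hr.symm hz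
  obtain ⟨c, a, u, hzw, hca⟩ := bridge_head hb'
  obtain ⟨k, d, hdec, hLR, hdh⟩ := decomp_left c a u hca
  rw [← hzw] at hdec hLR
  have hd_ne : d ≠ [] := by
    rintro rfl
    rw [hLR] at hr
    simp [leftReduce, dropHeadRun, truncHead] at hr
    exact hz hr
  have hm_suffix : (a :: d) <:+ z' := ⟨c :: List.replicate k a, by rw [hdec]; simp⟩
  have hm_rev_pref : (a :: d).reverse <+: z'.reverse := List.reverse_prefix.mpr hm_suffix
  obtain ⟨x0, y0, u', hrev', hcb0⟩ := bridge_rev_head hb'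
  have h2 : 2 ≤ (a :: d).reverse.length := by
    have := List.length_pos_iff.mpr hd_ne
    simp only [List.length_reverse, List.length_cons]
    omega
  obtain ⟨x, y, v, hxy⟩ := exists_cons_cons h2
  have hxc : x = x0 ∧ y = y0 := by
    rw [hxy, hrev'] at hm_rev_pref
    obtain ⟨t, ht⟩ := hm_rev_pref
    simp at ht
    exact ⟨ht.1, ht.2.1⟩
  have hcb : x ≠ y := by rw [hxc.1, hxc.2]; exact hcb0
  obtain ⟨r, e, hdec2, hLR2, heh⟩ := decomp_left x y v hcb
  rw [hLR, hxy, hLR2] at hr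
  -- hr : (y :: e).reverse = z
  have hz_eq : z = e.reverse ++ [y] := by rw [← hr]; simp
  have hm_eq : a :: d = z ++ (List.replicate r y ++ [x]) := by
    have h3 := congrArg List.reverse hdec2
    rw [← hxy, List.reverse_reverse] at h3
    rw [h3, hz_eq]
    simp [List.reverse_replicate, List.append_assoc]
  have hz_rev : z.reverse = y :: e := by rw [← hr, List.reverse_reverse]
  obtain ⟨z0, zt, rfl⟩ : ∃ z0 zt, z = z0 :: zt := by
    cases z with
    | nil => exact absurd rfl hz
    | cons z0 zt => exact ⟨z0, zt, rfl⟩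
  have hinj := List.cons.inj (by rw [List.cons_append] at hm_eq; exact hm_eq :
    a :: d = z0 :: (zt ++ (List.replicate r y ++ [x])))
  obtain ⟨ha, hd_eq⟩ := hinj
  refine ⟨c, a, y, x, k, r, by simp [ha], ?_, hca, hcb, ?_, ?_, ?_, ?_⟩
  · rw [hz_eq]
    exact List.getLast?_concat
  · intro w hw
    apply hdh
    rw [hd_eq]
    cases zt with
    | nil => simp at hw
    | cons t0 tt => simpa using hw
  · intro w hw
    apply heh
    rw [hz_rev] at hw
    simpa using hw
  · rw [hdec, hm_eq]
  · rw [hLR, hm_eq]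

lemma bridgeReduce_nil : bridgeReduce ([] : List α) = [] := by
  unfold bridgeReduce
  rw [if_pos]
  simp [rleSize, List.destutter]

lemma bridgeReduce_len_le_one {x : List α} (h : x.length ≤ 1) : bridgeReduce x = [] := by
  match x, h with
  | [], _ => exact bridgeReduce_nil
  | [a], _ =>
    unfold bridgeReduce
    rw [if_pos]
    simp [rleSize, List.destutter]

lemma bridgeReduce_cases {z' : List α} (hb' : IsBridge z') :
    bridgeReduce z' = [] ∨ (bridgeReduce z').length = 1 ∨ IsBridge (bridgeReduce z') := by
  by_cases h0 : bridgeReduce z' = []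
  · exact Or.inl h0
  by_cases h1 : (bridgeReduce z').length = 1
  · exact Or.inr (Or.inl h1)
  right; right
  obtain ⟨c, a, b, c', k, r, hhead, hlast, hca, hcb, htail, hrtail, hdec, hLR⟩ :=
    struct hb' h0 rfl
  set z := bridgeReduce z' with hzdef
  have hzlen : 2 ≤ z.length := by
    have := List.length_pos_iff.mpr h0
    omega
  obtain ⟨p, q, t, hpqt⟩ := exists_cons_cons hzlen
  apply isBridge_of_parts
  · refine ⟨p, q, t, hpqt, ?_⟩
    have hpa : p = a := by rw [hpqt] at hhead; simpa using hhead
    have hq : q ≠ a := by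
      apply htail
      rw [hpqt]
      simp
    rw [hpa]
    exact fun hh => hq hh.symm
  · have hzrev : 2 ≤ z.reverse.length := by simpa using hzlen
    obtain ⟨p', q', t', hpqt'⟩ := exists_cons_cons hzrev
    refine ⟨p', q', t', hpqt', ?_⟩
    have hpb : p' = b := by
      have : z.getLast? = some p' := by
        rw [← List.head?_reverse, hpqt']
        rfl
      rw [hlast] at this
      exact (Option.some.inj this).symm
    have hq' : q' ≠ b := by
      apply hrtail
      rw [hpqt']
      simp
    rw [hpb]
    exact fun hh => hq' hh.symm

lemma iterate_infix (x : List α) (t : ℕ) : bridgeReduce^[t] x <:+: x := by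
  induction t with
  | zero => exact List.infix_rfl
  | succ n ih =>
    rw [Function.iterate_succ_apply']
    exact (bridgeReduce_infix _).trans ih

lemma iterate_cases {x : List α} (hb : IsBridge x) (t : ℕ) :
    bridgeReduce^[t] x = [] ∨ (bridgeReduce^[t] x).length = 1 ∨ IsBridge (bridgeReduce^[t] x) := by
  induction t with
  | zero => exact Or.inr (Or.inr hb)
  | succ n ih =>
    rw [Function.iterate_succ_apply']
    rcases ih with h | h | h
    · rw [h]; exact Or.inl bridgeReduce_nil
    · exact Or.inl (bridgeReduce_len_le_one (le_of_eq h))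
    · exact bridgeReduce_cases h

lemma isBridge_ne_nil {w : List α} (hb : IsBridge w) : w ≠ [] := by
  intro h
  have := hb.1
  rw [h] at this
  simp at this

/-- the key: the iterate sitting above a bridge is a bridge -/
lemma iterate_isBridge {x z : List α} (hb : IsBridge x) (hz : IsBridge z) (t : ℕ)
    (h : bridgeReduce (bridgeReduce^[t] x) = z) : IsBridge (bridgeReduce^[t] x) := by
  rcases iterate_cases hb t with h' | h' | h'
  · rw [h', bridgeReduce_nil] at h
    exact absurd h.symm (isBridge_ne_nil hz)
  · rw [bridgeReduce_len_le_one (le_of_eq h')] at h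
    exact absurd h.symm (isBridge_ne_nil hz)
  · exact h'

def occFin (w T : List α) : Finset ℕ :=
  (Finset.range (T.length + 1)).filter
    (fun i => (T.drop i).take w.length = w ∧ i + w.length ≤ T.length)

lemma countOcc_eq (w T : List α) : countOcc w T = (occFin w T).card := rfl

lemma one_le_countOcc {w T : List α} (h : w <:+: T) (hw : w ≠ []) : 1 ≤ countOcc w T := by
  obtain ⟨s, t, hst⟩ := h
  rw [countOcc_eq]
  refine Finset.card_pos.mpr ⟨s.length, ?_⟩
  unfold occFin
  rw [Finset.mem_filter, Finset.mem_range]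
  have hlen : s.length + w.length + t.length = T.length := by
    rw [← hst]; simp; omega
  refine ⟨by omega, ?_, by omega⟩
  rw [← hst, List.append_assoc, List.drop_left' rfl, List.take_left' rfl]

lemma replicate_cons_inj {b : α} {r1 r2 : ℕ} {c1 c2 : α} {l1 l2 : List α}
    (h1 : c1 ≠ b) (h2 : c2 ≠ b)
    (he : List.replicate r1 b ++ c1 :: l1 = List.replicate r2 b ++ c2 :: l2) :
    r1 = r2 ∧ c1 = c2 ∧ l1 = l2 := by
  induction r1 generalizing r2 with
  | zero =>
    cases r2 with
    | zero => simp at he; exact ⟨rfl, he.1, he.2⟩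
    | succ m =>
      rw [List.replicate_succ] at he
      simp at he
      exact absurd he.1 h1
  | succ n ih =>
    cases r2 with
    | zero =>
      rw [List.replicate_succ] at he
      simp at he
      exact absurd he.1.symm h2
    | succ m =>
      rw [List.replicate_succ, List.replicate_succ] at he
      simp only [List.cons_append, List.cons.injEq] at he
      obtain ⟨hr, hc, hl⟩ := ih he.2
      exact ⟨by omega, hc, hl⟩

lemma k_le_aux {T : List α} {a c1 c2 : α} {k1 k2 q1 q2 : ℕ} {W1 W2 : List α}
    (hc2 : c2 ≠ a)
    (h1 : T.drop q1 = c1 :: (List.replicate k1 a ++ W1))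
    (h2 : T.drop q2 = c2 :: (List.replicate k2 a ++ W2))
    (heq : q1 + k1 = q2 + k2) : k1 ≤ k2 := by
  by_contra hlt
  push_neg at hlt
  have e1 : T.drop q2 = (c1 :: (List.replicate k1 a ++ W1)).drop (k1 - k2) := by
    rw [← h1, List.drop_drop]
    congr 1
    omega
  obtain ⟨j, hj⟩ : ∃ j, k1 - k2 = j + 1 := ⟨k1 - k2 - 1, by omega⟩
  rw [hj, List.drop_succ_cons,
    List.drop_append_of_le_length (by rw [List.length_replicate]; omega),
    List.drop_replicate, show k1 - j = k2 + 1 by omega, List.replicate_succ,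
    List.cons_append] at e1
  have := h2.symm.trans e1
  simp at this
  exact hc2 this.1

lemma pos_unique {T z : List α} {a b c1 c1' c2 c2' : α} {k1 r1 k2 r2 q1 q2 : ℕ}
    {rest1 rest2 : List α}
    (hc1 : c1 ≠ a) (hc2 : c2 ≠ a) (hc1' : c1' ≠ b) (hc2' : c2' ≠ b)
    (h1 : T.drop q1 = c1 :: (List.replicate k1 a ++ (z ++ (List.replicate r1 b ++ (c1' :: rest1)))))
    (h2 : T.drop q2 = c2 :: (List.replicate k2 a ++ (z ++ (List.replicate r2 b ++ (c2' :: rest2)))))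
    (heq : q1 + (k1+1) = q2 + (k2+1)) :
    q1 = q2 ∧ k1 = k2 ∧ r1 = r2 ∧ c1 = c2 ∧ c1' = c2' ∧ rest1 = rest2 := by
  have hk12 : k1 ≤ k2 := k_le_aux hc2 h1 h2 (by omega)
  have hk21 : k2 ≤ k1 := k_le_aux hc1 h2 h1 (by omega)
  have hk : k1 = k2 := le_antisymm hk12 hk21
  subst hk
  have hq : q1 = q2 := by omega
  subst hq
  have he := h1.symm.trans h2
  simp only [List.cons.injEq] at he
  obtain ⟨hc, htl⟩ := he
  have h3 := List.append_cancel_left htl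
  have h4 := List.append_cancel_left h3
  obtain ⟨hr, hc', hl⟩ := replicate_cons_inj hc1' hc2' h4
  exact ⟨rfl, rfl, hr, hc, hc', hl⟩

lemma KFin_mem {T z z' : List α} :
    z' ∈ KFin T z ↔ z' <:+: T ∧ IsBridge z' ∧ bridgeReduce z' = z := by
  unfold KFin
  rw [Finset.mem_filter]
  constructor
  · rintro ⟨-, h⟩; exact h
  · intro h
    exact ⟨by rw [List.mem_toFinset, List.mem_sublists]; exact h.1.sublist, h⟩

lemma occ_mem {w T : List α} {q : ℕ} :
    q ∈ occFin w T ↔ (T.drop q).take w.length = w ∧ q + w.length ≤ T.length := by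
  unfold occFin
  rw [Finset.mem_filter, Finset.mem_range]
  constructor
  · rintro ⟨-, h⟩; exact h
  · intro h; exact ⟨by omega, h⟩

lemma occ_drop {w T : List α} {q : ℕ} (h : q ∈ occFin w T) :
    T.drop q = w ++ (T.drop q).drop w.length := by
  obtain ⟨ht, -⟩ := occ_mem.mp h
  conv_lhs => rw [← List.take_append_drop w.length (T.drop q), ht]

lemma sum_countOcc_le {T z : List α} (hz : IsBridge z) :
    ∑ z' ∈ KFin T z, countOcc z' T ≤ countOcc z T := by
  classical
  rw [countOcc_eq]
  have hsig : ∑ z' ∈ KFin T z, countOcc z' T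
      = ((KFin T z).sigma (fun z' => occFin z' T)).card := by
    rw [Finset.card_sigma]
    exact Finset.sum_congr rfl (fun z' _ => countOcc_eq z' T)
  rw [hsig]
  apply Finset.card_le_card_of_injOn
    (fun pr => pr.2 + (pr.1.length - (leftReduce pr.1).length))
  · rintro ⟨z', q⟩ hmem
    rw [Finset.mem_coe, Finset.mem_sigma] at hmem
    rw [Finset.mem_coe]
    obtain ⟨hK, hq⟩ := hmem
    dsimp only at hK hq ⊢
    obtain ⟨hinf, hb', hred⟩ := KFin_mem.mp hK
    obtain ⟨c, a, b, c', k, r, hhead, hlast, hca, hcb, -, -, hdec, hLR⟩ :=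
      struct hb' (isBridge_ne_nil hz) hred
    have hoff : z'.length - (leftReduce z').length = k + 1 := by
      have l1 := congrArg List.length hdec
      have l2 := congrArg List.length hLR
      simp at l1 l2
      omega
    rw [hoff]
    obtain ⟨htake, hle⟩ := occ_mem.mp hq
    have hdropq : T.drop q = z' ++ (T.drop q).drop z'.length := occ_drop hq
    have hlen' : z'.length = 1 + k + z.length + r + 1 := by
      rw [hdec]; simp; omega
    rw [occ_mem]
    constructor
    · have e1 : T.drop (q + (k+1)) = (T.drop q).drop (k+1) := by
        rw [List.drop_drop]
      rw [e1, hdropq, hdec]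
      rw [List.cons_append, List.drop_succ_cons,
        List.append_assoc, List.drop_left' List.length_replicate]
      simp only [List.append_assoc]
      exact List.take_left' rfl
    · omega
  · rintro ⟨z1, q1⟩ h1 ⟨z2, q2⟩ h2 heq
    simp only [Finset.coe_sigma, Set.mem_sigma_iff] at h1 h2
    obtain ⟨hK1, hq1⟩ := h1
    obtain ⟨hK2, hq2⟩ := h2
    dsimp only at hK1 hq1 hK2 hq2 heq
    rw [Finset.mem_coe] at hK1 hK2
    rw [Finset.mem_coe] at hq1 hq2
    obtain ⟨hinf1, hb1, hred1⟩ := KFin_mem.mp hK1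
    obtain ⟨hinf2, hb2, hred2⟩ := KFin_mem.mp hK2
    obtain ⟨c1, a1, b1, c1', k1, r1, hhead1, hlast1, hca1, hcb1, -, -, hdec1, hLR1⟩ :=
      struct hb1 (isBridge_ne_nil hz) hred1
    obtain ⟨c2, a2, b2, c2', k2, r2, hhead2, hlast2, hca2, hcb2, -, -, hdec2, hLR2⟩ :=
      struct hb2 (isBridge_ne_nil hz) hred2
    have ha : a2 = a1 := by
      rw [hhead1] at hhead2
      exact Option.some.inj hhead2.symm
    have hbb : b2 = b1 := by
      rw [hlast1] at hlast2
      exact Option.some.inj hlast2.symm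
    subst ha hbb
    have hoff1 : z1.length - (leftReduce z1).length = k1 + 1 := by
      have l1 := congrArg List.length hdec1
      have l2 := congrArg List.length hLR1
      simp at l1 l2
      omega
    have hoff2 : z2.length - (leftReduce z2).length = k2 + 1 := by
      have l1 := congrArg List.length hdec2
      have l2 := congrArg List.length hLR2
      simp at l1 l2
      omega
    rw [hoff1, hoff2] at heq
    have hd1 : T.drop q1 = c1 :: (List.replicate k1 a2 ++ (z ++ (List.replicate r1 b2
        ++ (c1' :: ((T.drop q1).drop z1.length))))) := by
      conv_lhs => rw [occ_drop hq1]
      nth_rewrite 1 [hdec1]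
      simp only [List.cons_append, List.append_assoc, List.nil_append, List.singleton_append]
    have hd2 : T.drop q2 = c2 :: (List.replicate k2 a2 ++ (z ++ (List.replicate r2 b2
        ++ (c2' :: ((T.drop q2).drop z2.length))))) := by
      conv_lhs => rw [occ_drop hq2]
      nth_rewrite 1 [hdec2]
      simp only [List.cons_append, List.append_assoc, List.nil_append, List.singleton_append]
    obtain ⟨hq, hk, hr, hc, hc', hrest⟩ := pos_unique hca1 hca2 hcb1 hcb2 hd1 hd2 heq
    have hz12 : z1 = z2 := by
      rw [hdec1, hdec2, hk, hr, hc, hc']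
    subst hz12
    subst hq
    rfl

lemma KIter_mem {T w z'' : List α} {t : ℕ} :
    z'' ∈ KIter T w t ↔ z'' <:+: T ∧ IsBridge z'' ∧ bridgeReduce^[t] z'' = w := by
  unfold KIter
  rw [Finset.mem_filter]
  constructor
  · rintro ⟨-, h⟩; exact h
  · intro h
    exact ⟨by rw [List.mem_toFinset, List.mem_sublists]; exact h.1.sublist, h⟩

lemma KplusIter_mem {T w z'' : List α} {t : ℕ} :
    z'' ∈ KplusIter T w t ↔ (z'' <:+: T ∧ IsBridge z'' ∧ bridgeReduce^[t] z'' = w)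
      ∧ 2 ≤ (KFin T z'').card := by
  unfold KplusIter
  rw [Finset.mem_filter, KIter_mem]

lemma KplusIter_zero_subset {T z : List α} : KplusIter T z 0 ⊆ {z} := by
  intro z'' h
  obtain ⟨⟨-, -, h0⟩, -⟩ := KplusIter_mem.mp h
  simp only [Function.iterate_zero, id] at h0
  rw [Finset.mem_singleton, h0]

lemma KplusIter_succ {T z : List α} (hz : IsBridge z) (t : ℕ) :
    KplusIter T z (t+1) = (KFin T z).biUnion (fun z' => KplusIter T z' t) := by
  ext z''
  rw [KplusIter_mem, Finset.mem_biUnion]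
  constructor
  · rintro ⟨⟨hinf, hb'', hred⟩, hbr⟩
    refine ⟨bridgeReduce^[t] z'', KFin_mem.mpr ⟨(iterate_infix z'' t).trans hinf,
      iterate_isBridge hb'' hz t
        (by rw [← Function.iterate_succ_apply' bridgeReduce t z'']; exact hred),
      by rw [← Function.iterate_succ_apply' bridgeReduce t z'']; exact hred⟩, ?_⟩
    exact KplusIter_mem.mpr ⟨⟨hinf, hb'', rfl⟩, hbr⟩
  · rintro ⟨z', hz', hmem⟩
    obtain ⟨⟨hinf, hb'', hred⟩, hbr⟩ := KplusIter_mem.mp hmem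
    obtain ⟨-, -, hred'⟩ := KFin_mem.mp hz'
    exact ⟨⟨hinf, hb'', by rw [Function.iterate_succ_apply', hred, hred']⟩, hbr⟩

lemma KplusIter_succ_card {T z : List α} (hz : IsBridge z) (t : ℕ) :
    (KplusIter T z (t+1)).card = ∑ z' ∈ KFin T z, (KplusIter T z' t).card := by
  rw [KplusIter_succ hz t]
  apply Finset.card_biUnion
  intro x hx y hy hxy
  show Disjoint (KplusIter T x t) (KplusIter T y t)
  rw [Finset.disjoint_left]
  intro u hux huy
  obtain ⟨⟨-, -, hu1⟩, -⟩ := KplusIter_mem.mp hux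
  obtain ⟨⟨-, -, hu2⟩, -⟩ := KplusIter_mem.mp huy
  exact hxy (hu1.symm.trans hu2)

lemma card_KFin_le_countOcc {T z : List α} (hz : IsBridge z) :
    (KFin T z).card ≤ countOcc z T := by
  refine le_trans ?_ (sum_countOcc_le hz)
  have : ∀ z' ∈ KFin T z, 1 ≤ countOcc z' T := by
    intro z' h
    obtain ⟨hinf, hb', -⟩ := KFin_mem.mp h
    exact one_le_countOcc hinf (isBridge_ne_nil hb')
  calc (KFin T z).card = ∑ _z' ∈ KFin T z, 1 := by simp
    _ ≤ ∑ z' ∈ KFin T z, countOcc z' T := Finset.sum_le_sum this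

lemma main_bound (T : List α) (i : ℕ) :
    ∀ z : List α, z <:+: T → IsBridge z →
      (∑ t ∈ Finset.range (i+1), (KplusIter T z t).card) + 1 ≤ countOcc z T := by
  induction i with
  | zero =>
    intro z hinf hb
    rw [Finset.sum_range_one]
    have hone : 1 ≤ countOcc z T := one_le_countOcc hinf (isBridge_ne_nil hb)
    have hle1 : (KplusIter T z 0).card ≤ 1 := by
      have := Finset.card_le_card (KplusIter_zero_subset (T := T) (z := z))
      simpa using this
    by_cases hbr : 2 ≤ (KFin T z).card
    · have h2 : 2 ≤ countOcc z T := le_trans hbr (card_KFin_le_countOcc hb)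
      omega
    · have h0 : KplusIter T z 0 = ∅ := by
        rw [Finset.eq_empty_iff_forall_notMem]
        intro z'' h
        have hsub := KplusIter_zero_subset h
        rw [Finset.mem_singleton] at hsub
        subst hsub
        exact hbr (KplusIter_mem.mp h).2
      rw [h0]
      simpa using hone
  | succ n ih =>
    intro z hinf hb
    rw [Finset.sum_range_succ']
    rw [Finset.sum_congr rfl (fun t _ => KplusIter_succ_card hb t), Finset.sum_comm]
    have hone : 1 ≤ countOcc z T := one_le_countOcc hinf (isBridge_ne_nil hb)
    have hle1 : (KplusIter T z 0).card ≤ 1 := by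
      have := Finset.card_le_card (KplusIter_zero_subset (T := T) (z := z))
      simpa using this
    have hA : (∑ z' ∈ KFin T z, ∑ t ∈ Finset.range (n+1), (KplusIter T z' t).card)
        + (KFin T z).card ≤ countOcc z T := by
      have h1 : ∀ z' ∈ KFin T z,
          (∑ t ∈ Finset.range (n+1), (KplusIter T z' t).card) + 1 ≤ countOcc z' T := by
        intro z' h
        obtain ⟨hinf', hb', -⟩ := KFin_mem.mp h
        exact ih z' hinf' hb'
      calc (∑ z' ∈ KFin T z, ∑ t ∈ Finset.range (n+1), (KplusIter T z' t).card)
          + (KFin T z).card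
          = ∑ z' ∈ KFin T z,
            ((∑ t ∈ Finset.range (n+1), (KplusIter T z' t).card) + 1) := by
            rw [Finset.sum_add_distrib]
            simp
        _ ≤ ∑ z' ∈ KFin T z, countOcc z' T := Finset.sum_le_sum h1
        _ ≤ countOcc z T := sum_countOcc_le hb
    by_cases hbr : 2 ≤ (KFin T z).card
    · have h0 : (KplusIter T z 0).card ≤ 1 := hle1
      omega
    · have h0 : KplusIter T z 0 = ∅ := by
        rw [Finset.eq_empty_iff_forall_notMem]
        intro z'' h
        have hsub := KplusIter_zero_subset h
        rw [Finset.mem_singleton] at hsub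
        subst hsub
        exact hbr (KplusIter_mem.mp h).2
      rw [h0]
      simp only [Finset.card_empty, add_zero]
      rcases Nat.eq_zero_or_pos (KFin T z).card with hc | hc
      · have hempty : KFin T z = ∅ := Finset.card_eq_zero.mp hc
        rw [hempty]
        simpa using hone
      · omega

end Aux

theorem stmt7 {α : Type*} [DecidableEq α] (T w : List α)
    (hw : w <:+: T) (hb : IsBridge w) (h2 : 2 ≤ (KFin T w).card) :
    ∑ i ∈ Finset.Icc 1 (rleSize T / 2 - 1), (KplusIter T w i).card ≤ countOcc w T := by
  have hmain := Aux.main_bound T (rleSize T / 2 - 1) w hw hb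
  have hsub : Finset.Icc 1 (rleSize T / 2 - 1)
      ⊆ Finset.range ((rleSize T / 2 - 1) + 1) := by
    intro x hx
    rw [Finset.mem_Icc] at hx
    rw [Finset.mem_range]
    omega
  have h3 := Finset.sum_le_sum_of_subset (f := fun i => (KplusIter T w i).card) hsub
  omega
end
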